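/- arXiv:0708.4073 — 4 statements merged into one kernel-verified Lean document; each statement's English description precedes it below -/
import Mathlib

section
/- Let A be a unital C*-algebra and let u₁, u₂ be unitaries in A with ‖uᵢ − 1‖ < 1/2 for i = 1, 2. Writing 2πi·hᵢ = log uᵢ (using the principal branch of log via the power series log z = −∑_{n≥1}(1−z)ⁿ/n), we have ‖h₁ − h₂‖ ≤ π⁻¹‖u₁ − u₂‖. -/
open scoped Real

/-- The logarithm defined by the absolutely convergent power series
`log z = -∑_{n≥1} (1-z)ⁿ/n`, applied in a Banach algebra. -/
noncomputable def seriesLog {A : Type*} [NormedRing A] [NormedAlgebra ℂ A] (u : A) : A :=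
  -∑' n : ℕ, ((n + 1 : ℂ))⁻¹ • (1 - u) ^ (n + 1)

lemma pow_sub_pow_norm_le {A : Type*} [NormedRing A] (a b : A) {r : ℝ}
    (ha : ‖a‖ ≤ r) (hb : ‖b‖ ≤ r) : ∀ n : ℕ,
    ‖a ^ (n + 1) - b ^ (n + 1)‖ ≤ (n + 1) * r ^ n * ‖a - b‖ := by
  have hr : 0 ≤ r := le_trans (norm_nonneg a) ha
  intro n
  induction n with
  | zero => simp
  | succ n ih =>
    have key : a ^ (n + 2) - b ^ (n + 2) = a * (a ^ (n + 1) - b ^ (n + 1)) + (a - b) * b ^ (n + 1) := by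
      rw [mul_sub, sub_mul, ← pow_succ', ← pow_succ']; abel
    rw [key]
    calc ‖a * (a ^ (n + 1) - b ^ (n + 1)) + (a - b) * b ^ (n + 1)‖
        ≤ ‖a * (a ^ (n + 1) - b ^ (n + 1))‖ + ‖(a - b) * b ^ (n + 1)‖ := norm_add_le _ _
      _ ≤ ‖a‖ * ‖a ^ (n + 1) - b ^ (n + 1)‖ + ‖a - b‖ * ‖b ^ (n + 1)‖ := by
          gcongr <;> exact norm_mul_le _ _
      _ ≤ r * ((n + 1) * r ^ n * ‖a - b‖) + ‖a - b‖ * r ^ (n + 1) := by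
          gcongr
          exact le_trans (norm_pow_le' _ (Nat.succ_pos n)) (by gcongr)
      _ = (n + 1 + 1) * r ^ (n + 1) * ‖a - b‖ := by ring
      _ ≤ (↑(n + 1) + 1) * r ^ (n + 1) * ‖a - b‖ := le_of_eq (by push_cast; ring)

/-- If `u₁, u₂` are unitaries in a unital C*-algebra with `‖uᵢ - 1‖ < 1/2` and
`hᵢ = (2πi)⁻¹ log uᵢ`, then `‖h₁ - h₂‖ ≤ π⁻¹ ‖u₁ - u₂‖`. -/
theorem log_unitary_dist_le {A : Type*} [NormedRing A] [StarRing A] [CStarRing A]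
    [NormedAlgebra ℂ A] [CompleteSpace A] [StarModule ℂ A]
    (u₁ u₂ : A) (hu₁ : u₁ ∈ unitary A) (hu₂ : u₂ ∈ unitary A)
    (h₁' : ‖u₁ - 1‖ < 1 / 2) (h₂' : ‖u₂ - 1‖ < 1 / 2)
    (h₁ h₂ : A)
    (hh₁ : ((2 * π : ℝ) * Complex.I) • h₁ = seriesLog u₁)
    (hh₂ : ((2 * π : ℝ) * Complex.I) • h₂ = seriesLog u₂) :
    ‖h₁ - h₂‖ ≤ π⁻¹ * ‖u₁ - u₂‖ := by
  set a := 1 - u₁ with ha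
  set b := 1 - u₂ with hb
  have ha2 : ‖a‖ ≤ 1 / 2 := by rw [ha, ← norm_neg]; simpa using h₁'.le
  have hb2 : ‖b‖ ≤ 1 / 2 := by rw [hb, ← norm_neg]; simpa using h₂'.le
  have hab : ‖a - b‖ = ‖u₁ - u₂‖ := by rw [← norm_neg]; congr 1; rw [ha, hb]; abel
  -- summability of each series
  have hsum : ∀ c : A, ‖c‖ ≤ 1 / 2 →
      Summable fun n : ℕ => ((n + 1 : ℂ))⁻¹ • c ^ (n + 1) := by
    intro c hc
    apply Summable.of_norm
    apply Summable.of_nonneg_of_le (fun n => norm_nonneg _)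
      (fun n => ?_) (summable_geometric_of_lt_one (by norm_num) (by norm_num : (1:ℝ)/2 < 1))
    calc ‖((n + 1 : ℂ))⁻¹ • c ^ (n + 1)‖ = ‖((n + 1 : ℂ))⁻¹‖ * ‖c ^ (n + 1)‖ := norm_smul _ _
      _ ≤ 1 * (1 / 2) ^ n := by
          gcongr
          · rw [norm_inv, show ((n:ℂ)+1) = ((n+1:ℕ):ℂ) by push_cast; ring, RCLike.norm_natCast]
            rw [inv_le_one_iff₀]; right; exact_mod_cast Nat.one_le_iff_ne_zero.mpr (Nat.succ_ne_zero n)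
          · calc ‖c ^ (n + 1)‖ ≤ ‖c‖ ^ (n + 1) := norm_pow_le' _ (Nat.succ_pos n)
              _ ≤ (1 / 2) ^ (n + 1) := pow_le_pow_left₀ (norm_nonneg c) hc (n + 1)
              _ ≤ (1 / 2) ^ n := pow_le_pow_of_le_one (by norm_num) (by norm_num) (Nat.le_succ n)
      _ = (1 / 2) ^ n := one_mul _
  have hsa := hsum a ha2
  have hsb := hsum b hb2
  -- difference of the logs
  have hdiff : seriesLog u₁ - seriesLog u₂ =
      -∑' n : ℕ, ((n + 1 : ℂ))⁻¹ • (a ^ (n + 1) - b ^ (n + 1)) := by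
    simp only [seriesLog, ← ha, ← hb, smul_sub]
    rw [neg_sub_neg, ← Summable.tsum_sub hsb hsa, ← tsum_neg]
    congr 1; ext n; abel
  -- norm bound on the difference
  have hbound : ‖seriesLog u₁ - seriesLog u₂‖ ≤ 2 * ‖u₁ - u₂‖ := by
    rw [hdiff, norm_neg]
    have hsd : Summable fun n : ℕ => ((n + 1 : ℂ))⁻¹ • (a ^ (n + 1) - b ^ (n + 1)) := by
      simpa [smul_sub] using hsa.sub hsb
    calc ‖∑' n : ℕ, ((n + 1 : ℂ))⁻¹ • (a ^ (n + 1) - b ^ (n + 1))‖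
        ≤ ∑' n : ℕ, (1 / 2 : ℝ) ^ n * ‖a - b‖ := by
          apply tsum_of_norm_bounded (g := fun n => (1/2:ℝ)^n * ‖a - b‖) ?_ (fun n => ?_)
          · exact ((summable_geometric_of_lt_one (by norm_num) (by norm_num)).mul_right _).hasSum
          · calc ‖((n + 1 : ℂ))⁻¹ • (a ^ (n + 1) - b ^ (n + 1))‖
                = ‖((n + 1 : ℂ))⁻¹‖ * ‖a ^ (n + 1) - b ^ (n + 1)‖ := norm_smul _ _
              _ ≤ (↑(n + 1))⁻¹ * ((n + 1) * (1 / 2) ^ n * ‖a - b‖) := by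
                  gcongr
                  · rw [norm_inv, show ((n:ℂ)+1) = ((n+1:ℕ):ℂ) by push_cast; ring, RCLike.norm_natCast]
                  · exact pow_sub_pow_norm_le a b ha2 hb2 n
              _ = (1 / 2 : ℝ) ^ n * ‖a - b‖ := by
                  push_cast
                  rw [← mul_assoc, ← mul_assoc, inv_mul_cancel₀ (by positivity : ((n:ℝ)+1) ≠ 0), one_mul]
      _ = 2 * ‖u₁ - u₂‖ := by
          rw [tsum_mul_right, tsum_geometric_of_lt_one (by norm_num) (by norm_num), hab]
          norm_num
  -- conclude
  have hπ : (0:ℝ) < π := Real.pi_pos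
  have hnorm : ‖((2 * π : ℝ) * Complex.I)‖ = 2 * π := by
    simp [norm_mul, abs_of_pos hπ, mul_comm]
  have : (2 * π) * ‖h₁ - h₂‖ ≤ 2 * ‖u₁ - u₂‖ := by
    calc (2 * π) * ‖h₁ - h₂‖ = ‖((2 * π : ℝ) * Complex.I) • (h₁ - h₂)‖ := by
          rw [norm_smul, hnorm]
      _ = ‖seriesLog u₁ - seriesLog u₂‖ := by rw [smul_sub, hh₁, hh₂]
      _ ≤ 2 * ‖u₁ - u₂‖ := hbound
  rw [inv_mul_eq_div, le_div_iff₀ hπ]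
  nlinarith
end

section
/- Let u : [0,1] → U(Mₙ) be a path of unitary n×n complex matrices with Lipschitz constant at most C (with respect to operator norm). Suppose λ : [0,1] → 𝕋 ⊂ ℂ is a continuous function such that λ(t) is an eigenvalue of u(t) for every t ∈ [0,1]. Then λ is Lipschitz with constant at most C. -/
open scoped Matrix.Norms.L2Operator
open Set

noncomputable instance matrixCStarAlgebraAux {n : ℕ} :
    CStarAlgebra (Matrix (Fin n) (Fin n) ℂ) := ⟨⟩

/-- Bauer–Fike-type estimate: if `a` is unitary (hence normal) and `z` is in the spectrum of
`b`, then `z` is within `‖b - a‖` of the spectrum of `a`. -/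
lemma exists_spectrum_close {A : Type*} [CStarAlgebra A] (a b : A)
    (ha : a ∈ unitary A) {z : ℂ} (hz : z ∈ spectrum ℂ b) :
    ∃ μ ∈ spectrum ℂ a, ‖z - μ‖ ≤ ‖b - a‖ := by
  have hnt : Nontrivial A := by
    by_contra h
    rw [not_nontrivial_iff_subsingleton] at h
    exact spectrum.mem_iff.mp hz (isUnit_of_subsingleton _)
  haveI := isStarNormal_of_mem_unitary ha
  obtain ⟨μ, hμ, hμd⟩ := (spectrum.isCompact (𝕜 := ℂ) a).exists_infDist_eq_dist
    (spectrum.nonempty a) z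
  set d := Metric.infDist z (spectrum ℂ a) with hdd
  refine ⟨μ, hμ, ?_⟩
  rw [← dist_eq_norm, ← hμd]
  by_contra hlt
  push_neg at hlt
  have hd0 : 0 < d := lt_of_le_of_lt (norm_nonneg _) hlt
  have hdle : ∀ w ∈ spectrum ℂ a, d ≤ ‖z - w‖ := by
    intro w hw
    simpa [dist_eq_norm] using Metric.infDist_le_dist_of_mem (x := z) hw
  have hzne : ∀ w ∈ spectrum ℂ a, z - w ≠ 0 := by
    intro w hw hzw
    have := hdle w hw
    rw [hzw, norm_zero] at this
    exact absurd this (not_le.mpr hd0)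
  have hcont : ContinuousOn (fun w : ℂ => (z - w)⁻¹) (spectrum ℂ a) :=
    (continuousOn_const.sub continuousOn_id).inv₀ hzne
  have hcont2 : ContinuousOn (fun w : ℂ => z - w) (spectrum ℂ a) :=
    continuousOn_const.sub continuousOn_id
  set r := cfc (fun w : ℂ => (z - w)⁻¹) a with hr
  have h1 : algebraMap ℂ A z - a = cfc (fun w : ℂ => z - w) a := by
    rw [cfc_sub (fun _ : ℂ => z) (fun w : ℂ => w) a continuousOn_const continuousOn_id,
      cfc_const z a, cfc_id' ℂ a]
  have hmul : r * (algebraMap ℂ A z - a) = 1 := by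
    rw [h1, hr, ← cfc_mul _ _ a hcont hcont2,
      cfc_congr (g := fun _ : ℂ => (1 : ℂ)) (fun w hw => inv_mul_cancel₀ (hzne w hw)),
      cfc_const 1 a, map_one]
  have hmul' : (algebraMap ℂ A z - a) * r = 1 := by
    rw [h1, hr, ← cfc_mul _ _ a hcont2 hcont,
      cfc_congr (g := fun _ : ℂ => (1 : ℂ)) (fun w hw => mul_inv_cancel₀ (hzne w hw)),
      cfc_const 1 a, map_one]
  have hnr : ‖r‖ ≤ d⁻¹ := by
    refine norm_cfc_le (by positivity) fun w hw => ?_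
    rw [norm_inv]
    exact inv_anti₀ hd0 (hdle w hw)
  have hsmall : ‖r * (b - a)‖ < 1 := by
    calc ‖r * (b - a)‖ ≤ ‖r‖ * ‖b - a‖ := norm_mul_le _ _
      _ ≤ d⁻¹ * ‖b - a‖ := by
          apply mul_le_mul_of_nonneg_right hnr (norm_nonneg _)
      _ < d⁻¹ * d := by
          apply mul_lt_mul_of_pos_left hlt (by positivity)
      _ = 1 := inv_mul_cancel₀ hd0.ne'
  have hub : IsUnit (algebraMap ℂ A z - b) := by
    have key : algebraMap ℂ A z - b = (algebraMap ℂ A z - a) * (1 - r * (b - a)) := by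
      rw [mul_sub, mul_one, ← mul_assoc, hmul', one_mul]
      abel
    rw [key]
    exact (isUnit_iff_exists.mpr ⟨r, hmul', hmul⟩).mul
      (isUnit_one_sub_of_norm_lt_one hsmall)
  exact spectrum.mem_iff.mp hz hub

/-- Local Lipschitz estimate at a point, via the spectral gap and the intermediate value
theorem. -/
lemma eigenvalue_local_lip {n : ℕ} {C : ℝ}
    (u : ℝ → Matrix (Fin n) (Fin n) ℂ)
    (hu : ∀ t ∈ Icc (0 : ℝ) 1, u t ∈ unitary (Matrix (Fin n) (Fin n) ℂ))
    (hLip : ∀ s ∈ Icc (0 : ℝ) 1, ∀ t ∈ Icc (0 : ℝ) 1, ‖u s - u t‖ ≤ C * |s - t|)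
    (lam : ℝ → ℂ) (hcont : ContinuousOn lam (Icc (0 : ℝ) 1))
    (hsp : ∀ t ∈ Icc (0 : ℝ) 1, lam t ∈ spectrum ℂ (u t))
    (hC : 0 ≤ C) {s : ℝ} (hs : s ∈ Icc (0:ℝ) 1) :
    ∃ ε > 0, ∀ r ∈ Icc (0:ℝ) 1, |r - s| < ε → ‖lam r - lam s‖ ≤ C * |r - s| := by
  obtain ⟨δ, hδ0, hδ⟩ : ∃ δ > 0, ∀ μ ∈ spectrum ℂ (u s), μ ≠ lam s → δ ≤ ‖lam s - μ‖ := by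
    set D := spectrum ℂ (u s) \ {lam s} with hD
    rcases D.eq_empty_or_nonempty with hDe | hDe
    · exact ⟨1, one_pos, fun μ hμ hne => absurd (show μ ∈ D from ⟨hμ, hne⟩)
        (by rw [hDe]; exact notMem_empty μ)⟩
    · obtain ⟨μ₀, hμ₀, hdist⟩ :=
        (((Matrix.finite_spectrum (u s)).diff (t := {lam s})).isCompact).exists_infDist_eq_dist
          hDe (lam s)
      refine ⟨Metric.infDist (lam s) D, ?_, fun μ hμ hne => ?_⟩
      · rw [hdist]
        exact dist_pos.mpr fun h => hμ₀.2 (h ▸ rfl)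
      · simpa [dist_eq_norm] using Metric.infDist_le_dist_of_mem (show μ ∈ D from ⟨hμ, hne⟩)
  have hC1 : (0:ℝ) < C + 1 := by linarith
  refine ⟨δ / (2 * (C + 1)), by positivity, fun r hr hrs => ?_⟩
  have dich : ∀ w ∈ Icc (0:ℝ) 1, |w - s| < δ / (2 * (C + 1)) →
      ‖lam w - lam s‖ ≤ C * |w - s| ∨ δ / 2 < ‖lam w - lam s‖ := by
    intro w hw hws
    have hCw : C * |w - s| < δ / 2 := by
      calc C * |w - s| ≤ (C + 1) * |w - s| := by nlinarith [abs_nonneg (w - s)]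
        _ < (C + 1) * (δ / (2 * (C + 1))) := mul_lt_mul_of_pos_left hws hC1
        _ = δ / 2 := by field_simp
    obtain ⟨μ, hμ, hμle⟩ := exists_spectrum_close (u s) (u w) (hu s hs) (hsp w hw)
    have hle : ‖lam w - μ‖ ≤ C * |w - s| :=
      hμle.trans (by simpa [abs_sub_comm] using hLip w hw s hs)
    by_cases hmu : μ = lam s
    · left; rw [← hmu]; exact hle
    · right
      have h1 := hδ μ hμ hmu
      have h2 : ‖lam s - μ‖ ≤ ‖lam s - lam w‖ + ‖lam w - μ‖ := by
        simpa [dist_eq_norm] using dist_triangle (lam s) (lam w) μ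
      have e1 : ‖μ - lam s‖ = ‖lam s - μ‖ := norm_sub_rev _ _
      have e2 : ‖lam s - lam w‖ = ‖lam w - lam s‖ := norm_sub_rev _ _
      linarith
  by_contra hcon
  have hg : δ / 2 < ‖lam r - lam s‖ := (dich r hr hrs).resolve_left hcon
  have hsub : uIcc s r ⊆ Icc (0:ℝ) 1 := Set.ordConnected_Icc.uIcc_subset hs hr
  have hgc : ContinuousOn (fun w => ‖lam w - lam s‖) (uIcc s r) :=
    ((hcont.mono hsub).sub continuousOn_const).norm
  obtain ⟨c, hc, hgc2⟩ := intermediate_value_uIcc hgc (show δ / 2 ∈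
      uIcc ‖lam s - lam s‖ ‖lam r - lam s‖ by
    rw [sub_self, norm_zero, uIcc_of_le (norm_nonneg _)]
    exact ⟨le_of_lt (half_pos hδ0), hg.le⟩)
  have hcI : c ∈ Icc (0:ℝ) 1 := hsub hc
  have habs : |c - s| ≤ |r - s| := by
    rcases le_total s r with h | h
    · rw [Set.uIcc_of_le h] at hc
      rw [abs_of_nonneg (by linarith [hc.1] : (0:ℝ) ≤ c - s),
        abs_of_nonneg (by linarith : (0:ℝ) ≤ r - s)]
      linarith [hc.2]
    · rw [Set.uIcc_of_ge h] at hc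
      rw [abs_of_nonpos (by linarith [hc.2] : c - s ≤ 0),
        abs_of_nonpos (by linarith : r - s ≤ 0)]
      linarith [hc.1]
  have hcs : |c - s| < δ / (2 * (C + 1)) := lt_of_le_of_lt habs hrs
  have hgc2' : ‖lam c - lam s‖ = δ / 2 := hgc2
  rcases dich c hcI hcs with h | h
  · rw [hgc2'] at h
    have hCw : C * |c - s| < δ / 2 := by
      calc C * |c - s| ≤ (C + 1) * |c - s| := by nlinarith [abs_nonneg (c - s)]
        _ < (C + 1) * (δ / (2 * (C + 1))) := mul_lt_mul_of_pos_left hcs hC1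
        _ = δ / 2 := by field_simp
    linarith
  · rw [hgc2'] at h
    exact lt_irrefl _ h

/-- If `u : [0,1] → U(Mₙ)` is a path of unitary matrices which is Lipschitz with constant `C`
(in the operator norm) and `λ : [0,1] → 𝕋` is a continuous selection of eigenvalues of `u(t)`,
then `λ` is Lipschitz with constant `C`. -/
theorem eigenvalue_path_lipschitz {n : ℕ} (C : ℝ)
    (u : ℝ → Matrix (Fin n) (Fin n) ℂ)
    (hu : ∀ t ∈ Icc (0 : ℝ) 1, u t ∈ unitary (Matrix (Fin n) (Fin n) ℂ))
    (hLip : ∀ s ∈ Icc (0 : ℝ) 1, ∀ t ∈ Icc (0 : ℝ) 1, ‖u s - u t‖ ≤ C * |s - t|)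
    (lam : ℝ → ℂ) (hcont : ContinuousOn lam (Icc (0 : ℝ) 1))
    (habs : ∀ t ∈ Icc (0 : ℝ) 1, ‖lam t‖ = 1)
    (hsp : ∀ t ∈ Icc (0 : ℝ) 1, lam t ∈ spectrum ℂ (u t)) :
    ∀ s ∈ Icc (0 : ℝ) 1, ∀ t ∈ Icc (0 : ℝ) 1, ‖lam s - lam t‖ ≤ C * |s - t| := by
  have h01 : (0:ℝ) ∈ Icc (0:ℝ) 1 := ⟨le_refl 0, zero_le_one⟩
  have h11 : (1:ℝ) ∈ Icc (0:ℝ) 1 := ⟨zero_le_one, le_refl 1⟩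
  have hC : 0 ≤ C := by
    have h := hLip 0 h01 1 h11
    have h2 := norm_nonneg (u 0 - u 1)
    simp only [zero_sub, abs_neg, abs_one, mul_one] at h
    linarith
  have main : ∀ s ∈ Icc (0:ℝ) 1, ∀ t ∈ Icc (0:ℝ) 1, s ≤ t →
      ‖lam t - lam s‖ ≤ C * (t - s) := by
    intro s hs t ht hst
    set K := {r ∈ Icc s t | ‖lam r - lam s‖ ≤ C * (r - s)} with hK
    have hIccsub : Icc s t ⊆ Icc (0:ℝ) 1 := Icc_subset_Icc hs.1 ht.2
    have hsK : s ∈ K := ⟨⟨le_refl s, hst⟩, by simp⟩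
    have hbdd : BddAbove K := ⟨t, fun r hr => hr.1.2⟩
    have hKcl : IsClosed K := by
      have hKeq : K = Icc s t ∩ (fun r => ‖lam r - lam s‖ - C * (r - s)) ⁻¹' Iic 0 := by
        ext r
        simp only [hK, mem_sep_iff, mem_inter_iff, mem_preimage, mem_Iic, sub_nonpos]
      rw [hKeq]
      exact ContinuousOn.preimage_isClosed_of_isClosed
        ((((hcont.mono hIccsub).sub continuousOn_const).norm).sub
          (continuousOn_const.mul (continuousOn_id.sub continuousOn_const)))
        isClosed_Icc isClosed_Iic
    have hmK : sSup K ∈ K := hKcl.csSup_mem ⟨s, hsK⟩ hbdd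
    set m := sSup K with hm
    have hmt : m ≤ t := csSup_le ⟨s, hsK⟩ fun r hr => hr.1.2
    have hm01 : m ∈ Icc (0:ℝ) 1 := hIccsub hmK.1
    rcases eq_or_lt_of_le hmt with heq | hlt
    · have h := hmK.2
      rw [heq] at h
      exact h
    · exfalso
      obtain ⟨ε, hε0, hloc⟩ := eigenvalue_local_lip u hu hLip lam hcont hsp hC hm01
      set r := min t (m + ε/2) with hrdef
      have hmr : m < r := lt_min hlt (by linarith)
      have hrIcc : r ∈ Icc s t := ⟨le_trans hmK.1.1 hmr.le, min_le_left _ _⟩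
      have hr01 : r ∈ Icc (0:ℝ) 1 := hIccsub hrIcc
      have hrm : |r - m| < ε := by
        rw [abs_of_nonneg (by linarith)]
        have h := min_le_right t (m + ε/2)
        have : r ≤ m + ε/2 := h
        linarith
      have h1 := hloc r hr01 hrm
      have hrK : r ∈ K := by
        refine ⟨hrIcc, ?_⟩
        have htri : ‖lam r - lam s‖ ≤ ‖lam r - lam m‖ + ‖lam m - lam s‖ := by
          simpa [dist_eq_norm] using dist_triangle (lam r) (lam m) (lam s)
        have habs' : |r - m| = r - m := abs_of_nonneg (by linarith)
        calc ‖lam r - lam s‖ ≤ ‖lam r - lam m‖ + ‖lam m - lam s‖ := htri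
          _ ≤ C * |r - m| + C * (m - s) := add_le_add h1 hmK.2
          _ = C * (r - s) := by rw [habs']; ring
      exact absurd (le_csSup hbdd hrK) (not_le.mpr hmr)
  intro s hs t ht
  rcases le_total s t with h | h
  · have hm := main s hs t ht h
    calc ‖lam s - lam t‖ = ‖lam t - lam s‖ := by
          rw [norm_sub_rev]
      _ ≤ C * (t - s) := hm
      _ = C * |s - t| := by rw [abs_sub_comm, abs_of_nonneg (by linarith)]
  · have hm := main t ht s hs h
    calc ‖lam s - lam t‖ = ‖lam s - lam t‖ := rfl
      _ ≤ C * (s - t) := hm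
      _ = C * |s - t| := by rw [abs_of_nonneg (by linarith)]
end

section
/- Let α be an action of ℤ² on a unital C*-algebra A (a group homomorphism n ↦ αₙ from ℤ² to Aut(A)). If a pair of unitaries u₁, u₂ ∈ A satisfies u₁·α_{ξ₁}(u₂) = u₂·α_{ξ₂}(u₁), where ξ₁ = (1,0), ξ₂ = (0,1), then there exists a unique family of unitaries (uₙ)_{n∈ℤ²} satisfying u_{ξ₁} = u₁, u_{ξ₂} = u₂, and the cocycle identity uₙ·αₙ(u_m) = u_{n+m} for all n, m ∈ ℤ². -/
section Aux

variable {A : Type*} [NormedRing A] [StarRing A] [CStarRing A]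
    [NormedAlgebra ℂ A] [CompleteSpace A] [StarModule ℂ A]

/-- Restriction of a star-algebra automorphism to the unitary group. -/
def unitaryAut (e : A ≃⋆ₐ[ℂ] A) : unitary A ≃* unitary A where
  toFun := Unitary.map ⟨(e : A →* A), map_star e⟩
  invFun := Unitary.map ⟨(e.symm : A →* A), map_star e.symm⟩
  left_inv x := Subtype.ext (e.symm_apply_apply (x : A))
  right_inv x := Subtype.ext (e.apply_symm_apply (x : A))
  map_mul' := map_mul _

/-- The homomorphism `ℤ² → Aut(unitary A)` induced by an action on `A`. -/
def cocyclePhi (α : ℤ × ℤ → A ≃⋆ₐ[ℂ] A)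
    (hαadd : ∀ n m : ℤ × ℤ, ∀ x : A, α (n + m) x = α n (α m x)) :
    Multiplicative (ℤ × ℤ) →* MulAut (unitary A) :=
  MonoidHom.mk' (fun n => unitaryAut (α n.toAdd))
    (fun n m => by
      ext x
      exact hαadd n.toAdd m.toAdd x)

end Aux

/-- Let `α` be an action of `ℤ²` on a unital C*-algebra `A`.  If unitaries `u₁, u₂` satisfy
`u₁ · α_{ξ₁}(u₂) = u₂ · α_{ξ₂}(u₁)`, then there is a unique family of unitaries
`(uₙ)_{n ∈ ℤ²}` with `u_{ξ₁} = u₁`, `u_{ξ₂} = u₂` and the cocycle identity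
`uₙ · αₙ(u_m) = u_{n+m}`. -/
theorem exists_unique_cocycle_of_pair {A : Type*} [NormedRing A] [StarRing A] [CStarRing A]
    [NormedAlgebra ℂ A] [CompleteSpace A] [StarModule ℂ A]
    (α : ℤ × ℤ → A ≃⋆ₐ[ℂ] A)
    (hα₀ : ∀ x : A, α 0 x = x)
    (hαadd : ∀ n m : ℤ × ℤ, ∀ x : A, α (n + m) x = α n (α m x))
    (u₁ u₂ : A) (hu₁ : u₁ ∈ unitary A) (hu₂ : u₂ ∈ unitary A)
    (hcomm : u₁ * α (1, 0) u₂ = u₂ * α (0, 1) u₁) :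
    ∃! u : ℤ × ℤ → A,
      (∀ n : ℤ × ℤ, u n ∈ unitary A) ∧
      u (1, 0) = u₁ ∧ u (0, 1) = u₂ ∧
      ∀ n m : ℤ × ℤ, u n * α n (u m) = u (n + m) := by
  classical
  set φ : Multiplicative (ℤ × ℤ) →* MulAut (unitary A) := cocyclePhi α hαadd with hφdef
  set g₁ : unitary A ⋊[φ] Multiplicative (ℤ × ℤ) :=
    ⟨⟨u₁, hu₁⟩, Multiplicative.ofAdd (1, 0)⟩ with hg₁
  set g₂ : unitary A ⋊[φ] Multiplicative (ℤ × ℤ) :=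
    ⟨⟨u₂, hu₂⟩, Multiplicative.ofAdd (0, 1)⟩ with hg₂
  have hgc : Commute g₁ g₂ := by
    refine SemidirectProduct.ext ?_ ?_
    · exact Subtype.ext hcomm
    · show Multiplicative.ofAdd ((1, 0) : ℤ × ℤ) * Multiplicative.ofAdd (0, 1)
        = Multiplicative.ofAdd ((0, 1) : ℤ × ℤ) * Multiplicative.ofAdd (1, 0)
      rw [← ofAdd_add, ← ofAdd_add, add_comm]
  set F : ℤ × ℤ → (unitary A ⋊[φ] Multiplicative (ℤ × ℤ)) :=
    fun n => g₁ ^ n.1 * g₂ ^ n.2 with hF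
  have hFadd : ∀ n m : ℤ × ℤ, F (n + m) = F n * F m := by
    intro n m
    show g₁ ^ (n.1 + m.1) * g₂ ^ (n.2 + m.2) = g₁ ^ n.1 * g₂ ^ n.2 * (g₁ ^ m.1 * g₂ ^ m.2)
    rw [zpow_add, zpow_add]
    exact (hgc.zpow_zpow m.1 n.2).mul_mul_mul_comm _ _
  have hFright : ∀ n : ℤ × ℤ, (F n).right = Multiplicative.ofAdd n := by
    intro n
    show (g₁ ^ n.1 * g₂ ^ n.2).right = _
    rw [SemidirectProduct.mul_right]
    have h1 : (g₁ ^ n.1).right = Multiplicative.ofAdd ((n.1, 0) : ℤ × ℤ) := by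
      show SemidirectProduct.rightHom (g₁ ^ n.1) = _
      rw [map_zpow]
      show (Multiplicative.ofAdd ((1, 0) : ℤ × ℤ)) ^ n.1 = _
      rw [← ofAdd_zsmul]
      congr 1
      ext <;> simp
    have h2 : (g₂ ^ n.2).right = Multiplicative.ofAdd ((0, n.2) : ℤ × ℤ) := by
      show SemidirectProduct.rightHom (g₂ ^ n.2) = _
      rw [map_zpow]
      show (Multiplicative.ofAdd ((0, 1) : ℤ × ℤ)) ^ n.2 = _
      rw [← ofAdd_zsmul]
      congr 1
      ext <;> simp
    rw [h1, h2, ← ofAdd_add]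
    congr 1
    ext <;> simp
  set u : ℤ × ℤ → A := fun n => ((F n).left : A) with hu
  have hUnitary : ∀ n : ℤ × ℤ, u n ∈ unitary A := fun n => ((F n).left).2
  have hcoc : ∀ n m : ℤ × ℤ, u n * α n (u m) = u (n + m) := by
    intro n m
    have h : ((F (n + m)).left : A)
        = ((F n).left : A) * α n ((F m).left : A) := by
      rw [hFadd n m, SemidirectProduct.mul_left, hFright n]
      rfl
    exact h.symm
  have hval1 : u (1, 0) = u₁ := by
    show ((g₁ ^ (1 : ℤ) * g₂ ^ (0 : ℤ)).left : A) = u₁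
    rw [zpow_one, zpow_zero, mul_one]
  have hval2 : u (0, 1) = u₂ := by
    show ((g₁ ^ (0 : ℤ) * g₂ ^ (1 : ℤ)).left : A) = u₂
    rw [zpow_zero, zpow_one, one_mul]
  -- uniqueness core
  have hUnit : ∀ (n : ℤ × ℤ) (y : A), y ∈ unitary A → IsUnit (α n y) := by
    intro n y hy
    exact ⟨Unitary.toUnits ⟨α n y, Unitary.map_mem (α n) hy⟩, rfl⟩
  have key : ∀ w w' : ℤ × ℤ → A,
      (∀ n, w n ∈ unitary A) → w (1, 0) = u₁ → w (0, 1) = u₂ →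
      (∀ n m, w n * α n (w m) = w (n + m)) →
      (∀ n, w' n ∈ unitary A) → w' (1, 0) = u₁ → w' (0, 1) = u₂ →
      (∀ n m, w' n * α n (w' m) = w' (n + m)) → w = w' := by
    intro w w' hU h1 h2 hc hU' h1' h2' hc'
    have hone : ∀ x : ℤ × ℤ → A, (∀ n, x n ∈ unitary A) →
        (∀ n m, x n * α n (x m) = x (n + m)) → x 0 = 1 := by
      intro x hx hcx
      have h := hcx 0 0
      rw [hα₀, add_zero] at h
      have hxu : IsUnit (x 0) := ⟨Unitary.toUnits ⟨x 0, hx 0⟩, rfl⟩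
      exact hxu.mul_left_cancel (h.trans (mul_one _).symm)
    have line : ∀ a : ℤ, w (a, 0) = w' (a, 0) := by
      intro a
      induction a using Int.induction_on with
      | zero => rw [show ((0 : ℤ), (0 : ℤ)) = (0 : ℤ × ℤ) from rfl,
          hone w hU hc, hone w' hU' hc']
      | succ k ih =>
        have e1 := hc ((k : ℤ), 0) (1, 0)
        have e2 := hc' ((k : ℤ), 0) (1, 0)
        rw [h1] at e1
        rw [h1'] at e2
        have hadd : (((k : ℤ), 0) + (1, 0) : ℤ × ℤ) = ((k : ℤ) + 1, 0) := by
          rw [Prod.mk_add_mk]; norm_num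
        rw [hadd] at e1 e2
        rw [← e1, ← e2, ih]
      | pred k ih =>
        have e1 := hc ((-(k : ℤ) - 1), 0) (1, 0)
        have e2 := hc' ((-(k : ℤ) - 1), 0) (1, 0)
        rw [h1] at e1
        rw [h1'] at e2
        have hadd : ((-(k : ℤ) - 1, 0) + (1, 0) : ℤ × ℤ) = (-(k : ℤ), 0) := by
          rw [Prod.mk_add_mk]; norm_num
        rw [hadd] at e1 e2
        exact (hUnit _ _ hu₁).mul_right_cancel (by rw [e1, e2, ih])
    have hfull : ∀ a b : ℤ, w (a, b) = w' (a, b) := by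
      intro a b
      induction b using Int.induction_on with
      | zero => exact line a
      | succ k ih =>
        have e1 := hc (a, (k : ℤ)) (0, 1)
        have e2 := hc' (a, (k : ℤ)) (0, 1)
        rw [h2] at e1
        rw [h2'] at e2
        have hadd : ((a, (k : ℤ)) + (0, 1) : ℤ × ℤ) = (a, (k : ℤ) + 1) := by
          rw [Prod.mk_add_mk]; norm_num
        rw [hadd] at e1 e2
        rw [← e1, ← e2, ih]
      | pred k ih =>
        have e1 := hc (a, -(k : ℤ) - 1) (0, 1)
        have e2 := hc' (a, -(k : ℤ) - 1) (0, 1)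
        rw [h2] at e1
        rw [h2'] at e2
        have hadd : ((a, -(k : ℤ) - 1) + (0, 1) : ℤ × ℤ) = (a, -(k : ℤ)) := by
          rw [Prod.mk_add_mk]; norm_num
        rw [hadd] at e1 e2
        exact (hUnit _ _ hu₂).mul_right_cancel (by rw [e1, e2, ih])
    funext n
    exact hfull n.1 n.2
  refine ⟨u, ⟨hUnitary, hval1, hval2, hcoc⟩, ?_⟩
  rintro v ⟨hvU, hv1, hv2, hvc⟩
  exact key v u hvU hv1 hv2 hvc hUnitary hval1 hval2 hcoc
end

section
/- Let A be a unital C*-algebra with tracial state τ, let u be a unitary in A with ‖u − 1‖ < ε < 1, and put a = (2πi)⁻¹ log u (principal branch). Then |τ(a)| ≤ (2π)⁻¹ arcsin ε. -/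
open scoped Real
open Filter Finset Topology

namespace TraceLogAux

lemma two_arcsin_half_le {x : ℝ} (hx0 : 0 ≤ x) (hx1 : x ≤ 1) :
    2 * Real.arcsin (x / 2) ≤ Real.arcsin x := by
  set t := Real.arcsin (x / 2) with ht
  have hx2 : x / 2 ≤ 1 := by linarith
  have hsin : Real.sin t = x / 2 := Real.sin_arcsin (by linarith) hx2
  have ht0 : 0 ≤ t := Real.arcsin_nonneg.mpr (by linarith)
  have htle : t ≤ π / 4 := by
    have h2 : Real.sin (π / 4) = Real.sqrt 2 / 2 := Real.sin_pi_div_four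
    have hs2 : (1 : ℝ) ≤ Real.sqrt 2 := by
      nlinarith [Real.sq_sqrt (by norm_num : (2:ℝ) ≥ 0), Real.sqrt_nonneg 2]
    have : x / 2 ≤ Real.sqrt 2 / 2 := by linarith
    calc t ≤ Real.arcsin (Real.sqrt 2 / 2) := Real.monotone_arcsin this
      _ = Real.arcsin (Real.sin (π / 4)) := by rw [h2]
      _ = π / 4 := Real.arcsin_sin (by linarith [Real.pi_pos]) (by linarith [Real.pi_pos])
  have hcos : Real.cos t ≤ 1 := Real.cos_le_one t
  have hcos0 : 0 ≤ Real.cos t := Real.cos_nonneg_of_mem_Icc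
    ⟨by linarith [Real.pi_pos], by linarith [Real.pi_pos]⟩
  have h2t : Real.sin (2 * t) ≤ x := by
    rw [Real.sin_two_mul, hsin]
    nlinarith
  calc 2 * t = Real.arcsin (Real.sin (2 * t)) :=
        (Real.arcsin_sin (by linarith [Real.pi_pos]) (by linarith)).symm
    _ ≤ Real.arcsin x := Real.monotone_arcsin h2t

lemma log_of_abs_eq_one {z : ℂ} (hz : ‖z‖ = 1) :
    Complex.log z = (Complex.arg z : ℂ) * Complex.I := by
  rw [Complex.log, hz, Real.log_one, Complex.ofReal_zero, zero_add]

lemma abs_arg_le {z : ℂ} {r : ℝ} (hz : ‖z‖ = 1) (hr0 : 0 ≤ r)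
    (hzr : ‖z - 1‖ ≤ r) : |Complex.arg z| ≤ 2 * Real.arcsin (r / 2) := by
  set θ := Complex.arg z with hθ
  have hz0 : z ≠ 0 := by
    intro h; rw [h] at hz; simp at hz
  have hre : z.re = Real.cos θ := by
    rw [Complex.cos_arg hz0, hz, div_one]
  have him : z.im = Real.sin θ := by
    rw [Complex.sin_arg, hz, div_one]
  have h1 : (Real.cos θ - 1) ^ 2 + Real.sin θ ^ 2 ≤ r ^ 2 := by
    have := Complex.sq_norm (z - 1)
    rw [Complex.normSq_apply] at this
    simp only [Complex.sub_re, Complex.sub_im, Complex.one_re, Complex.one_im] at this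
    have h2 : ‖z - 1‖ ^ 2 ≤ r ^ 2 := by
      have := norm_nonneg (z - 1); nlinarith
    rw [this] at h2
    rw [hre, him] at h2
    nlinarith
  have h2 : Real.sin (θ / 2) ^ 2 ≤ (r / 2) ^ 2 := by
    have hc2 : Real.cos θ = 2 * Real.cos (θ / 2) ^ 2 - 1 := by
      have := Real.cos_two_mul (θ / 2)
      rw [show 2 * (θ / 2) = θ by ring] at this
      exact this
    have := Real.sin_sq_add_cos_sq (θ / 2)
    have := Real.sin_sq_add_cos_sq θ
    nlinarith
  have h3 : |Real.sin (θ / 2)| ≤ r / 2 := by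
    have := Real.sqrt_le_sqrt h2
    rwa [Real.sqrt_sq_eq_abs, Real.sqrt_sq (by linarith)] at this
  have h4 : |θ| ≤ π := Complex.abs_arg_le_pi z
  obtain ⟨h4a, h4b⟩ := abs_le.mp h4
  have h5 : Real.sin (|θ| / 2) = |Real.sin (θ / 2)| := by
    rw [show |θ| / 2 = |θ / 2| by rw [abs_div]; norm_num]
    rcases abs_cases (θ / 2) with ⟨h, h'⟩ | ⟨h, h'⟩
    · rw [h, abs_of_nonneg (Real.sin_nonneg_of_nonneg_of_le_pi h' (by linarith))]
    · rw [h, Real.sin_neg, abs_of_nonpos (Real.sin_nonpos_of_nonpos_of_neg_pi_le (le_of_lt h')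
        (by linarith))]
  have h6 : |θ| / 2 ≤ Real.arcsin (r / 2) := by
    have habs : Real.arcsin (Real.sin (|θ| / 2)) = |θ| / 2 :=
      Real.arcsin_sin (by linarith [abs_nonneg θ, Real.pi_pos]) (by linarith)
    rw [← habs, h5]
    exact Real.monotone_arcsin h3
  linarith

section CStar

variable {A : Type*} [CStarAlgebra A]

lemma exists_star_mul_self_eq (x : A) (hx : IsSelfAdjoint x) :
    ∃ s : A, star s * s = algebraMap ℝ A ‖x‖ - x := by
  obtain h | h := subsingleton_or_nontrivial A
  · exact ⟨0, Subsingleton.elim _ _⟩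
  refine ⟨cfc (fun t : ℝ => Real.sqrt (‖x‖ - t)) x, ?_⟩
  have hs : IsSelfAdjoint (cfc (fun t : ℝ => Real.sqrt (‖x‖ - t)) x) := cfc_predicate _ _
  rw [hs.star_eq, ← cfc_mul _ _ x (by fun_prop) (by fun_prop)]
  have heq : (spectrum ℝ x).EqOn
      (fun t => Real.sqrt (‖x‖ - t) * Real.sqrt (‖x‖ - t)) (fun t => ‖x‖ - t) := by
    intro t ht
    have : ‖t‖ ≤ ‖x‖ := spectrum.norm_le_norm_of_mem ht
    rw [Real.norm_eq_abs] at this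
    exact Real.mul_self_sqrt (by cases abs_cases t <;> linarith)
  rw [cfc_congr heq, cfc_sub _ _ x (by fun_prop) (by fun_prop),
    cfc_const _ _ , cfc_id' ℝ x]

lemma state_abs_le (τ : A →ₗ[ℂ] ℂ) (hτ1 : τ 1 = 1)
    (hτpos : ∀ a : A, 0 ≤ (τ (star a * a)).re ∧ (τ (star a * a)).im = 0)
    (x : A) (hx : IsSelfAdjoint x) : ‖τ x‖ ≤ ‖x‖ := by
  have key : ∀ y : A, IsSelfAdjoint y → (τ y).re ≤ ‖y‖ ∧ (τ y).im = 0 := by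
    intro y hy
    obtain ⟨s, hs⟩ := exists_star_mul_self_eq y hy
    obtain ⟨hre, him⟩ := hτpos s
    rw [hs] at hre him
    have halg : τ (algebraMap ℝ A ‖y‖) = (‖y‖ : ℂ) := by
      rw [IsScalarTower.algebraMap_apply ℝ ℂ A, Algebra.algebraMap_eq_smul_one, map_smul,
        hτ1, smul_eq_mul, mul_one, Complex.coe_algebraMap]
    rw [map_sub, halg] at hre him
    simp only [Complex.sub_re, Complex.sub_im, Complex.ofReal_re, Complex.ofReal_im] at hre him
    constructor
    · linarith
    · linarith
  obtain ⟨h1, h2⟩ := key x hx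
  obtain ⟨h3, _⟩ := key (-x) hx.neg
  rw [map_neg, Complex.neg_re, norm_neg] at h3
  have : ‖τ x‖ = |(τ x).re| := by
    rw [show τ x = ((τ x).re : ℂ) from Complex.ext rfl (by simpa using h2), Complex.norm_real, Real.norm_eq_abs,
      Complex.ofReal_re]
  rw [this]
  cases abs_cases (τ x).re <;> linarith

lemma unitary_isStarNormal {u : A} (hu : u ∈ unitary A) : IsStarNormal u :=
  ⟨by rw [Commute, SemiconjBy, (Unitary.mem_iff.mp hu).1, (Unitary.mem_iff.mp hu).2]⟩

variable [Nontrivial A]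

lemma spec_facts {u : A} (hu : u ∈ unitary A) {z : ℂ} (hz : z ∈ spectrum ℂ u) :
    ‖z‖ = 1 ∧ ‖z - 1‖ ≤ ‖u - 1‖ := by
  constructor
  · have := spectrum.subset_circle_of_unitary hu hz
    simpa using this
  · have hmem : z - 1 ∈ spectrum ℂ (u - algebraMap ℂ A 1) := by
      rw [← spectrum.sub_singleton_eq]
      exact Set.sub_mem_sub hz rfl
    rw [map_one] at hmem
    simpa using spectrum.norm_le_norm_of_mem hmem

lemma seriesLog_eq_cfc_log {u : A} (hu : u ∈ unitary A) (hr : ‖u - 1‖ < 1) :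
    seriesLog u = cfc Complex.log u := by
  haveI hnormal : IsStarNormal u := unitary_isStarNormal hu
  set r : ℝ := ‖u - 1‖ with hrdef
  have hr0 : 0 ≤ r := norm_nonneg _
  have hsp : ∀ z ∈ spectrum ℂ u, ‖z‖ = 1 ∧ ‖z - 1‖ ≤ r :=
    fun z hz => spec_facts hu hz
  have hre : ∀ z ∈ spectrum ℂ u, 0 < z.re := by
    intro z hz
    obtain ⟨h1, h2⟩ := hsp z hz
    have e1 : z.re ^ 2 + z.im ^ 2 = 1 := by
      have := Complex.sq_norm z
      rw [Complex.normSq_apply, h1] at this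
      nlinarith
    have e2 : (z.re - 1) ^ 2 + z.im ^ 2 ≤ r ^ 2 := by
      have h3 := Complex.sq_norm (z - 1)
      rw [Complex.normSq_apply] at h3
      simp only [Complex.sub_re, Complex.sub_im, Complex.one_re, Complex.one_im] at h3
      have h4 : ‖z - 1‖ ^ 2 ≤ r ^ 2 := by
        have := norm_nonneg (z - 1); nlinarith
      rw [h3] at h4
      nlinarith
    nlinarith
  have hlogc : ContinuousOn Complex.log (spectrum ℂ u) := fun z hz =>
    (continuousAt_clog (Complex.mem_slitPlane_iff.mpr (Or.inl (hre z hz)))).continuousWithinAt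
  set q : ℕ → ℂ → ℂ := fun k z => ((k + 1 : ℂ))⁻¹ * (1 - z) ^ (k + 1) with hqdef
  have hqc : ∀ k, Continuous (q k) := by
    intro k; fun_prop
  set f : ℕ → A := fun n => ((n + 1 : ℂ))⁻¹ • (1 - u) ^ (n + 1) with hfdef
  have hfnorm : ∀ n, ‖f n‖ ≤ r ^ (n + 1) := by
    intro n
    calc ‖f n‖ = ‖((n + 1 : ℂ))⁻¹‖ * ‖(1 - u) ^ (n + 1)‖ := norm_smul _ _
      _ ≤ 1 * ‖1 - u‖ ^ (n + 1) := by
          apply mul_le_mul _ (norm_pow_le' _ n.succ_pos) (norm_nonneg _) zero_le_one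
          rw [norm_inv]
          rw [show ((n : ℂ) + 1) = ((n + 1 : ℕ) : ℂ) by push_cast; ring, Complex.norm_natCast]
          rw [inv_le_one_iff₀]
          right; exact_mod_cast Nat.one_le_iff_ne_zero.mpr n.succ_ne_zero
      _ = r ^ (n + 1) := by rw [one_mul, norm_sub_rev]
  have hgeom : Summable fun n : ℕ => r ^ (n + 1) := by
    simpa [pow_succ] using (summable_geometric_of_lt_one hr0 hr).mul_right r
  have hsum : Summable f := Summable.of_norm_bounded hgeom hfnorm
  have htend1 : Tendsto (fun n => ∑ k ∈ range n, f k) atTop (𝓝 (∑' k, f k)) :=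
    hsum.hasSum.tendsto_sum_nat
  have h1z : cfc (fun z : ℂ => 1 - z) u = 1 - u := by
    rw [cfc_sub _ _ u (by fun_prop) (by fun_prop), cfc_const _ _, cfc_id' ℂ u, map_one]
  have hpart : ∀ n, cfc (∑ k ∈ range n, q k) u = ∑ k ∈ range n, f k := by
    intro n
    rw [cfc_sum _ u _ (fun k _ => (hqc k).continuousOn)]
    refine Finset.sum_congr rfl fun k _ => ?_
    rw [hqdef]
    rw [cfc_const_mul _ _ u (by fun_prop), cfc_pow (fun z : ℂ => 1 - z) (k + 1) u, h1z]
  have hHasSum : ∀ z ∈ spectrum ℂ u, HasSum (fun k => q k z) (-Complex.log z) := by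
    intro z hz
    obtain ⟨h1, h2⟩ := hsp z hz
    have hw : ‖z - 1‖ < 1 := by exact lt_of_le_of_lt h2 hr
    have H := Complex.hasSum_taylorSeries_log (z := z - 1) hw
    rw [show (1 : ℂ) + (z - 1) = z by ring] at H
    have H' : HasSum (fun n : ℕ => -(((n : ℂ))⁻¹ * (1 - z) ^ n)) (Complex.log z) := by
      refine H.congr_fun fun n => ?_
      have hpow : ((-1 : ℂ)) ^ (n + 1) * (z - 1) ^ n = -((1 - z) ^ n) := by
        rw [show (1 : ℂ) - z = (-1) * (z - 1) by ring, mul_pow, pow_succ]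
        ring
      rw [div_eq_mul_inv]
      rw [show (-1 : ℂ) ^ (n + 1) * (z - 1) ^ n * ((n : ℂ))⁻¹
          = ((-1 : ℂ)) ^ (n + 1) * (z - 1) ^ n * ((n : ℂ))⁻¹ from rfl, hpow]
      ring
    have H2 := (hasSum_nat_add_iff' 1).mpr H'
    simp only [range_one, sum_singleton, Nat.cast_zero, inv_zero, zero_mul, neg_zero,
      sub_zero] at H2
    have H3 := H2.neg
    simp only [neg_neg] at H3
    refine H3.congr_fun fun k => ?_
    rw [hqdef]
    push_cast
    ring_nf
  have hqbound : ∀ z ∈ spectrum ℂ u, ∀ k, ‖q k z‖ ≤ r ^ (k + 1) := by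
    intro z hz k
    obtain ⟨h1, h2⟩ := hsp z hz
    rw [hqdef]
    simp only [norm_mul, norm_pow, norm_inv]
    calc (‖(k : ℂ) + 1‖)⁻¹ * ‖1 - z‖ ^ (k + 1)
        ≤ 1 * r ^ (k + 1) := by
          apply mul_le_mul _ _ (by positivity) zero_le_one
          · rw [show ((k : ℂ) + 1) = ((k + 1 : ℕ) : ℂ) by push_cast; ring, Complex.norm_natCast]
            rw [inv_le_one_iff₀]
            right; exact_mod_cast Nat.one_le_iff_ne_zero.mpr k.succ_ne_zero
          · apply pow_le_pow_left₀ (norm_nonneg _)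
            rwa [show (1 : ℂ) - z = -(z - 1) by ring, norm_neg]
      _ = r ^ (k + 1) := one_mul _
  have hptwise : ∀ n, ∀ z ∈ spectrum ℂ u,
      ‖(∑ k ∈ range n, q k) z - -Complex.log z‖ ≤ r ^ (n + 1) * (1 - r)⁻¹ := by
    intro n z hz
    have hqsummable : Summable fun k => q k z := (hHasSum z hz).summable
    have htsum : ∑' k, q k z = -Complex.log z := (hHasSum z hz).tsum_eq
    have hsplit := Summable.sum_add_tsum_nat_add (f := fun k => q k z) n hqsummable
    rw [htsum] at hsplit
    have : (∑ k ∈ range n, q k) z - -Complex.log z = -(∑' j, q (j + n) z) := by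
      rw [Finset.sum_apply, ← hsplit]; ring_nf
      abel_nf
      simp only [add_comm]
    rw [this, norm_neg]
    have hsummable2 : Summable fun j => ‖q (j + n) z‖ :=
      ((hqsummable.comp_injective (add_left_injective n)).norm)
    calc ‖∑' j, q (j + n) z‖ ≤ ∑' j, ‖q (j + n) z‖ := norm_tsum_le_tsum_norm hsummable2
      _ ≤ ∑' j : ℕ, r ^ (n + 1) * r ^ j := by
          refine Summable.tsum_le_tsum (fun j => ?_) hsummable2
            ((summable_geometric_of_lt_one hr0 hr).mul_left _)
          calc ‖q (j + n) z‖ ≤ r ^ (j + n + 1) := hqbound z hz (j + n)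
            _ = r ^ (n + 1) * r ^ j := by rw [← pow_add]; ring_nf
      _ = r ^ (n + 1) * (1 - r)⁻¹ := by
          rw [tsum_mul_left, tsum_geometric_of_lt_one hr0 hr]
  have herr : ∀ n, ‖(∑ k ∈ range n, f k) - cfc (fun z => -Complex.log z) u‖
      ≤ r ^ (n + 1) * (1 - r)⁻¹ := by
    intro n
    have hpc : ContinuousOn (∑ k ∈ range n, q k) (spectrum ℂ u) := by
      rw [show (∑ k ∈ range n, q k) = fun z => ∑ k ∈ range n, q k z from
        funext fun z => Finset.sum_apply _ _ _]
      exact continuousOn_finset_sum _ fun k _ => (hqc k).continuousOn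
    have hsubeq := cfc_sub (∑ k ∈ range n, q k) (fun z => -Complex.log z) u hpc hlogc.neg
    rw [← hpart n, ← hsubeq]
    have h1r : (0:ℝ) ≤ (1 - r)⁻¹ := by
      rw [inv_nonneg]; linarith
    exact norm_cfc_le (by positivity) (hptwise n)
  have hM0 : Tendsto (fun n : ℕ => r ^ (n + 1) * (1 - r)⁻¹) atTop (𝓝 0) := by
    have := (tendsto_pow_atTop_nhds_zero_of_lt_one hr0 hr).comp (tendsto_add_atTop_nat 1)
    simpa using this.mul_const (1 - r)⁻¹
  have htend2 : Tendsto (fun n => ∑ k ∈ range n, f k) atTop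
      (𝓝 (cfc (fun z => -Complex.log z) u)) := by
    rw [tendsto_iff_norm_sub_tendsto_zero]
    exact squeeze_zero (fun n => norm_nonneg _) herr hM0
  have hkey : ∑' k, f k = cfc (fun z => -Complex.log z) u := tendsto_nhds_unique htend1 htend2
  rw [seriesLog, hkey, cfc_neg Complex.log u, neg_neg]

lemma norm_cfc_log_le {u : A} (hu : u ∈ unitary A) {ε : ℝ} (hε1 : ε < 1)
    (hdist : ‖u - 1‖ < ε) : ‖cfc Complex.log u‖ ≤ Real.arcsin ε := by
  have hε0 : 0 < ε := lt_of_le_of_lt (norm_nonneg _) hdist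
  refine norm_cfc_le (Real.arcsin_nonneg.mpr hε0.le) fun z hz => ?_
  obtain ⟨h1, h2⟩ := spec_facts hu hz
  rw [log_of_abs_eq_one h1, norm_mul, Complex.norm_I, Complex.norm_real, Real.norm_eq_abs,
    mul_one]
  have harg : |Complex.arg z| ≤ 2 * Real.arcsin (ε / 2) :=
    abs_arg_le h1 hε0.le (h2.trans hdist.le)
  exact harg.trans (two_arcsin_half_le hε0.le hε1.le)

end CStar

end TraceLogAux

/-- Let `τ` be a tracial state on a unital C*-algebra `A` and `u` a unitary with
`‖u - 1‖ < ε < 1`.  If `a = (2πi)⁻¹ log u`, then `|τ(a)| ≤ (2π)⁻¹ arcsin ε`. -/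
theorem trace_log_unitary_bound {A : Type*} [NormedRing A] [StarRing A] [CStarRing A]
    [NormedAlgebra ℂ A] [CompleteSpace A] [StarModule ℂ A]
    (τ : A →ₗ[ℂ] ℂ) (hτ1 : τ 1 = 1)
    (hτpos : ∀ a : A, 0 ≤ (τ (star a * a)).re ∧ (τ (star a * a)).im = 0)
    (hτtr : ∀ a b : A, τ (a * b) = τ (b * a))
    (ε : ℝ) (hε : ε < 1)
    (u : A) (hu : u ∈ unitary A) (hdist : ‖u - 1‖ < ε)
    (a : A) (ha : ((2 * π : ℝ) * Complex.I) • a = seriesLog u) :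
    ‖τ a‖ ≤ (2 * π)⁻¹ * Real.arcsin ε := by
  have hε0 : 0 < ε := lt_of_le_of_lt (norm_nonneg _) hdist
  have hπ : (0:ℝ) < 2 * π := by positivity
  obtain hsub | hnt := subsingleton_or_nontrivial A
  · rw [Subsingleton.elim a 0, map_zero, norm_zero]
    have := Real.arcsin_nonneg.mpr hε0.le
    positivity
  letI : CStarAlgebra A :=
    { ‹NormedRing A›, ‹StarRing A›, ‹CStarRing A›, ‹NormedAlgebra ℂ A›,
      ‹CompleteSpace A›, ‹StarModule ℂ A› with }
  haveI : IsStarNormal u := TraceLogAux.unitary_isStarNormal hu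
  set c : ℂ := ((2 * π : ℝ) : ℂ) * Complex.I with hc
  have hcne : c ≠ 0 := by
    apply mul_ne_zero _ Complex.I_ne_zero
    exact_mod_cast ne_of_gt hπ
  have hb : seriesLog u = cfc Complex.log u :=
    TraceLogAux.seriesLog_eq_cfc_log hu (hdist.trans hε)
  have haa : a = c⁻¹ • cfc Complex.log u := by
    rw [← hb, ← ha, smul_smul, inv_mul_cancel₀ hcne, one_smul]
  -- `a` is selfadjoint
  have hstarb : star (cfc Complex.log u) = -(cfc Complex.log u) := by
    rw [← cfc_star Complex.log u, ← cfc_neg Complex.log u]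
    refine cfc_congr fun z hz => ?_
    obtain ⟨h1, _⟩ := TraceLogAux.spec_facts hu hz
    rw [TraceLogAux.log_of_abs_eq_one h1]
    simp [Complex.star_def, map_mul, Complex.conj_ofReal, Complex.conj_I]
  have hsa : IsSelfAdjoint a := by
    rw [IsSelfAdjoint, haa, star_smul, hstarb]
    have hstarc : star c⁻¹ = -c⁻¹ := by
      have h1 : star c = -c := by
        rw [hc, Complex.star_def, map_mul, Complex.conj_ofReal, Complex.conj_I]
        ring
      rw [star_inv₀, h1, inv_neg]
    rw [hstarc, neg_smul, smul_neg, neg_neg]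
  have hnorm : ‖a‖ ≤ (2 * π)⁻¹ * Real.arcsin ε := by
    rw [haa, norm_smul, norm_inv]
    have hcnorm : ‖c‖ = 2 * π := by
      rw [hc, norm_mul, Complex.norm_I, mul_one, Complex.norm_real, Real.norm_eq_abs,
        abs_of_pos hπ]
    rw [hcnorm]
    have := TraceLogAux.norm_cfc_log_le hu hε hdist
    have h2πinv : (0:ℝ) ≤ (2 * π)⁻¹ := by positivity
    exact mul_le_mul_of_nonneg_left this h2πinv
  exact (TraceLogAux.state_abs_le τ hτ1 hτpos a hsa).trans hnorm
end
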